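/- (Left actions of E⁻¹.) For every integrable h : α → ℝ: (i) ∫ (E⁻¹ h) dμ = (1/⟨W⟩) · ∫ W·h dμ; (ii) ∫ W·(E⁻¹ h) dμ = (1/⟨W⁻¹⟩) · ( (2/⟨W⟩)·∫ W·h dμ − ∫ h dμ ). -/

import Mathlib

open MeasureTheory

/-- Total (coordinate) volume `V := μ(α)` as a real number. -/
noncomputable def totalVol {α : Type*} [MeasurableSpace α] (μ : Measure α) : ℝ :=
  (μ Set.univ).toReal

/-- Spatial average `⟨f⟩ := (1/V) ∫ f dμ`. -/
noncomputable def avg {α : Type*} [MeasurableSpace α] (μ : Measure α) (f : α → ℝ) : ℝ :=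
  (totalVol μ)⁻¹ * ∫ x, f x ∂μ

/-- The delocalization operator `E`:
`(E g)(x) = g(x) + ⟨g⟩ − W(x)⁻¹ ⟨W·g⟩`. -/
noncomputable def opE {α : Type*} [MeasurableSpace α] (μ : Measure α) (W : α → ℝ)
    (g : α → ℝ) : α → ℝ :=
  fun x => g x + avg μ g - (W x)⁻¹ * avg μ (fun y => W y * g y)

/-- The operator `E⁻¹`:
`(E⁻¹ h)(x) = h(x) − W(x)⁻¹ (∫h)/(∫W⁻¹) − (∫W·h)/(∫W) + 2 W(x)⁻¹ V (∫W·h)/((∫W⁻¹)(∫W))`. -/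
noncomputable def opEinv {α : Type*} [MeasurableSpace α] (μ : Measure α) (W : α → ℝ)
    (h : α → ℝ) : α → ℝ :=
  fun x => h x
    - (W x)⁻¹ * (∫ y, h y ∂μ) / (∫ y, (W y)⁻¹ ∂μ)
    - (∫ y, W y * h y ∂μ) / (∫ y, W y ∂μ)
    + 2 * (W x)⁻¹ * totalVol μ * (∫ y, W y * h y ∂μ)
        / ((∫ y, (W y)⁻¹ ∂μ) * (∫ y, W y ∂μ))

/-- The projector-type operator `G₊`:
`(G₊ h)(x) = W(x)·h(x) − W(x)·(∫W·h)/(∫W)`. -/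
noncomputable def opGplus {α : Type*} [MeasurableSpace α] (μ : Measure α) (W : α → ℝ)
    (h : α → ℝ) : α → ℝ :=
  fun x => W x * h x - W x * (∫ y, W y * h y ∂μ) / (∫ y, W y ∂μ)

/-- The projector-type operator `G₋`:
`(G₋ h)(x) = W(x)⁻¹·h(x) − W(x)⁻¹·(∫W⁻¹·h)/(∫W⁻¹)`. -/
noncomputable def opGminus {α : Type*} [MeasurableSpace α] (μ : Measure α) (W : α → ℝ)
    (h : α → ℝ) : α → ℝ :=
  fun x => (W x)⁻¹ * h x - (W x)⁻¹ * (∫ y, (W y)⁻¹ * h y ∂μ) / (∫ y, (W y)⁻¹ ∂μ)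

/-- Left actions of `E⁻¹`. For every integrable `h`:
(i) `∫ (E⁻¹ h) dμ = (1/⟨W⟩) · ∫ W·h dμ`;
(ii) `∫ W·(E⁻¹ h) dμ = (1/⟨W⁻¹⟩) · ((2/⟨W⟩)·∫ W·h dμ − ∫ h dμ)`. -/
theorem opEinv_left_actions
    {α : Type*} [MeasurableSpace α] (μ : Measure α) [IsFiniteMeasure μ]
    (hV : 0 < totalVol μ)
    (W : α → ℝ) (hW : Measurable W)
    (c C : ℝ) (hc : 0 < c) (hcC : c ≤ C)
    (hbound : ∀ x, c ≤ W x ∧ W x ≤ C) :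
    ∀ h : α → ℝ, Integrable h μ →
      (∫ x, opEinv μ W h x ∂μ = (avg μ W)⁻¹ * ∫ x, W x * h x ∂μ) ∧
      (∫ x, W x * opEinv μ W h x ∂μ
        = (avg μ (fun y => (W y)⁻¹))⁻¹
            * ((2 / avg μ W) * (∫ x, W x * h x ∂μ) - ∫ x, h x ∂μ)) := by
  intro h hh
  have hWpos : ∀ x, 0 < W x := fun x => lt_of_lt_of_le hc (hbound x).1
  have hWne : ∀ x, W x ≠ 0 := fun x => (hWpos x).ne'
  have hWinv : Integrable (fun x => (W x)⁻¹) μ := by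
    apply Integrable.mono' (integrable_const c⁻¹) hW.inv.aestronglyMeasurable
    filter_upwards with x
    rw [Real.norm_eq_abs, Pi.inv_apply, abs_inv, abs_of_pos (hWpos x)]
    exact inv_anti₀ hc (hbound x).1
  have hWh : Integrable (fun x => W x * h x) μ := by
    apply hh.bdd_mul (c := C) hW.aestronglyMeasurable
    exact Filter.Eventually.of_forall (fun x => by
      rw [Real.norm_eq_abs, abs_of_pos (hWpos x)]; exact (hbound x).2)
  set V := totalVol μ with hVdef
  set A := ∫ y, h y ∂μ with hA
  set B := ∫ y, W y * h y ∂μ with hB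
  set I := ∫ y, (W y)⁻¹ ∂μ with hI
  set J := ∫ y, W y ∂μ with hJ
  have hWint : Integrable W μ := by
    apply Integrable.mono' (integrable_const C) hW.aestronglyMeasurable
    filter_upwards with x
    rw [Real.norm_eq_abs, abs_of_pos (hWpos x)]; exact (hbound x).2
  have hIpos : 0 < I := by
    have h1 : (totalVol μ) * C⁻¹ ≤ I := by
      have := integral_mono (μ := μ) (integrable_const C⁻¹) hWinv (fun x =>
        inv_anti₀ (hWpos x) (hbound x).2)
      simpa [integral_const, totalVol, smul_eq_mul, Measure.real] using this
    have : 0 < totalVol μ * C⁻¹ := mul_pos hV (inv_pos.2 (lt_of_lt_of_le hc hcC))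
    linarith
  have hJpos : 0 < J := by
    have h1 : (totalVol μ) * c ≤ J := by
      have := integral_mono (μ := μ) (integrable_const c) hWint (fun x => (hbound x).1)
      simpa [integral_const, totalVol, smul_eq_mul, Measure.real] using this
    nlinarith
  set k1 : ℝ := -(A / I) + 2 * V * B / (I * J) with hk1
  set k2 : ℝ := -(B / J) with hk2
  have hint_const : Integrable (fun _ : α => k2) μ := integrable_const _
  have hWinvk1 : Integrable (fun x => (W x)⁻¹ * k1) μ := hWinv.mul_const _
  have heq : ∀ x, opEinv μ W h x = h x + (W x)⁻¹ * k1 + k2 := by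
    intro x
    simp only [opEinv, hk1, hk2, ← hA, ← hB, ← hI, ← hJ, ← hVdef]
    ring
  have hsum1 : Integrable (fun x => h x + (W x)⁻¹ * k1) μ := hh.add hWinvk1
  have int1 : ∫ x, opEinv μ W h x ∂μ = A + I * k1 + V * k2 := by
    rw [show (fun x => opEinv μ W h x) = fun x => (fun y => h y + (W y)⁻¹ * k1) x + k2 from
      funext fun x => by rw [heq x]]
    rw [integral_add hsum1 hint_const, integral_add hh hWinvk1,
      integral_mul_const, integral_const]
    simp only [smul_eq_mul]
    show A + I * k1 + (μ Set.univ).toReal * k2 = A + I * k1 + V * k2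
    rfl
  have heq2 : ∀ x, W x * opEinv μ W h x = W x * h x + k1 + W x * k2 := by
    intro x
    have : W x * (h x + (W x)⁻¹ * k1 + k2)
        = W x * h x + W x * ((W x)⁻¹ * k1) + W x * k2 := by ring
    rw [heq x, this, mul_inv_cancel_left₀ (hWne x)]
  have hsum2 : Integrable (fun x => W x * h x + k1) μ := hWh.add (integrable_const _)
  have hWk2 : Integrable (fun x => W x * k2) μ := hWint.mul_const _
  have int2 : ∫ x, W x * opEinv μ W h x ∂μ = B + V * k1 + J * k2 := by
    rw [show (fun x => W x * opEinv μ W h x)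
        = fun x => (fun y => W y * h y + k1) x + (fun y => W y * k2) x from
      funext fun x => by simp only; rw [heq2 x]]
    rw [integral_add hsum2 hWk2, integral_add hWh (integrable_const _),
      integral_mul_const, integral_const]
    simp only [smul_eq_mul]
    show B + (μ Set.univ).toReal * k1 + J * k2 = B + V * k1 + J * k2
    rfl
  have havgW : avg μ W = V⁻¹ * J := rfl
  have havgWinv : avg μ (fun y => (W y)⁻¹) = V⁻¹ * I := rfl
  constructor
  · rw [int1, havgW, hk1, hk2]
    field_simp
    ring
  · rw [int2, havgWinv, havgW, hk1, hk2]
    field_simp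
    ring
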